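/- Let A be a Λ-graded algebra over K which is graded-simple (A·A ≠ 0 and the only graded ideals are 0 and A). Then for every nonzero homogeneous element a ∈ A, the evaluation map ev_a: C(A) → A, χ ↦ χ(a), is injective. -/

import Mathlib

/-- A two-sided ideal of a (not necessarily associative) algebra. -/
def IsAlgIdeal (K A : Type*) [CommRing K] [NonUnitalNonAssocRing A] [Module K A]
    (I : Submodule K A) : Prop :=
  ∀ (a : A), ∀ x ∈ I, a * x ∈ I ∧ x * a ∈ I

/-- A centroidal transformation. -/
def IsCentroidal (K A : Type*) [CommRing K] [NonUnitalNonAssocRing A] [Module K A]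
    (χ : Module.End K A) : Prop :=
  ∀ a b : A, χ (a * b) = a * χ b ∧ χ (a * b) = χ a * b

/-- For a graded-simple `Λ`-graded algebra `A`, evaluation at a nonzero
homogeneous element is injective on the centroid. -/
theorem centroid_eval_injective_of_gradedSimple
    (K A : Type*) [CommRing K] [NonUnitalNonAssocRing A] [Module K A]
    [SMulCommClass K A A] [IsScalarTower K A A]
    (Λ : Type*) [AddCommGroup Λ] [DecidableEq Λ]
    (g : Λ → Submodule K A)
    (hdecomp : DirectSum.IsInternal g)
    (hgmul : ∀ (lam mu : Λ), ∀ x ∈ g lam, ∀ y ∈ g mu, x * y ∈ g (lam + mu))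
    (hAA : ∃ a b : A, a * b ≠ 0)
    (hgsimple : ∀ I : Submodule K A, IsAlgIdeal K A I →
      (I = ⨆ lam : Λ, I ⊓ g lam) → I = ⊥ ∨ I = ⊤)
    (a : A) (ha : a ≠ 0) (lam : Λ) (halam : a ∈ g lam)
    (χ ψ : Module.End K A) (hχ : IsCentroidal K A χ) (hψ : IsCentroidal K A ψ)
    (heval : χ a = ψ a) : χ = ψ := by

  set φ : Module.End K A := χ - ψ with hφdef
  have hφa : φ a = 0 := by
    simp only [hφdef, LinearMap.sub_apply, heval, sub_self]
  have hker : ∀ b x : A, φ x = 0 → φ (b * x) = 0 ∧ φ (x * b) = 0 := by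
    intro b x hx
    constructor
    · have h1 : φ (b * x) = b * φ x := by
        simp only [hφdef, LinearMap.sub_apply, (hχ b x).1, (hψ b x).1, mul_sub]
      rw [h1, hx, mul_zero]
    · have h1 : φ (x * b) = φ x * b := by
        simp only [hφdef, LinearMap.sub_apply, (hχ x b).2, (hψ x b).2, sub_mul]
      rw [h1, hx, zero_mul]
  set N : Submodule K A := LinearMap.ker φ with hN
  set I : Submodule K A := ⨆ mu : Λ, N ⊓ g mu with hI
  have htop : (⨆ mu : Λ, g mu) = ⊤ := hdecomp.submodule_iSup_eq_top
  have hmemtop : ∀ b : A, b ∈ ⨆ mu : Λ, g mu := by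
    intro b; rw [htop]; trivial
  have hIle : I ≤ N := iSup_le fun mu => inf_le_left
  have hIideal : IsAlgIdeal K A I := by
    intro b x hx
    refine Submodule.iSup_induction (motive := fun x => b * x ∈ I ∧ x * b ∈ I) _ hx ?_ ?_ ?_
    · intro mu y hy
      obtain ⟨hyN, hyg⟩ := hy
      have hyphi : φ y = 0 := hyN
      refine Submodule.iSup_induction (motive := fun b => b * y ∈ I ∧ y * b ∈ I) _ (hmemtop b) ?_ ?_ ?_
      · intro l c hc
        constructor
        · exact Submodule.mem_iSup_of_mem (l + mu)
            ⟨(hker c y hyphi).1, hgmul l mu c hc y hyg⟩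
        · exact Submodule.mem_iSup_of_mem (mu + l)
            ⟨(hker c y hyphi).2, hgmul mu l y hyg c hc⟩
      · simp
      · intro c d hc hd
        exact ⟨by rw [add_mul]; exact I.add_mem hc.1 hd.1,
               by rw [mul_add]; exact I.add_mem hc.2 hd.2⟩
    · simp
    · intro y z hy hz
      exact ⟨by rw [mul_add]; exact I.add_mem hy.1 hz.1,
             by rw [add_mul]; exact I.add_mem hy.2 hz.2⟩
  have hIgraded : I = ⨆ mu : Λ, I ⊓ g mu := by
    refine le_antisymm ?_ (iSup_le fun mu => inf_le_left)
    refine iSup_le fun mu => ?_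
    exact le_trans (le_inf (le_iSup (fun m => N ⊓ g m) mu) inf_le_right)
      (le_iSup (fun m => I ⊓ g m) mu)
  have haI : a ∈ I := Submodule.mem_iSup_of_mem lam ⟨hφa, halam⟩
  rcases hgsimple I hIideal hIgraded with hbot | htop'
  · exfalso; rw [hbot] at haI; exact ha (Submodule.mem_bot K |>.mp haI)
  · have hNtop : N = ⊤ := top_unique (htop' ▸ hIle)
    have : φ = 0 := by
      ext x
      have : x ∈ N := hNtop ▸ Submodule.mem_top
      simpa [hN] using this
    have := sub_eq_zero.mp (hφdef ▸ this)
    exact this
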